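/- Let (Ω, 𝒜) be a measurable space, let X be a compact metric space, and let g : Ω × X → ℂⁿ be such that g(ω,·) is continuous on X for each ω ∈ Ω and g(·,x) is measurable for each x ∈ X. Then the map ω ↦ g(ω, X) (the image of X under g(ω,·), which is a nonempty compact subset of ℂⁿ) is a measurable map from Ω to 𝒦′(ℂⁿ); that is, it is a random compact set in ℂⁿ. -/

import Mathlib

open TopologicalSpace

open EMetric ENNReal Filter Set Metric

lemma dense_iSup_aux {α : Type*} [TopologicalSpace α] {s : Set α} (hs : Dense s)
    {f : α → ℝ≥0∞} (hf : Continuous f) : ⨆ x : s, f x = ⨆ x, f x := by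
  refine le_antisymm (iSup_le fun x => le_iSup f x.1) (iSup_le fun (x : α) => ?_)
  have h1 : (nhdsWithin x s).NeBot := mem_closure_iff_nhdsWithin_neBot.mp (hs x)
  refine le_of_tendsto (x := nhdsWithin x s) (hf.continuousAt.tendsto.mono_left nhdsWithin_le_nhds) ?_
  filter_upwards [self_mem_nhdsWithin] with y hy
  exact le_iSup (fun t : s => f t) ⟨y, hy⟩

lemma dense_iInf_aux {α : Type*} [TopologicalSpace α] {s : Set α} (hs : Dense s)
    {f : α → ℝ≥0∞} (hf : Continuous f) : ⨅ x : s, f x = ⨅ x, f x := by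
  refine le_antisymm (le_iInf fun (x : α) => ?_) (le_iInf fun x => iInf_le f x.1)
  have h1 : (nhdsWithin x s).NeBot := mem_closure_iff_nhdsWithin_neBot.mp (hs x)
  refine ge_of_tendsto (x := nhdsWithin x s) (hf.continuousAt.tendsto.mono_left nhdsWithin_le_nhds) ?_
  filter_upwards [self_mem_nhdsWithin] with y hy
  exact iInf_le (fun t : s => f t) ⟨y, hy⟩

lemma measurable_of_edist_aux {Ω S : Type*} [MeasurableSpace Ω] [EMetricSpace S]
    [SecondCountableTopology S] [MeasurableSpace S] [BorelSpace S] {f : Ω → S}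
    (h : ∀ y, Measurable fun ω => edist (f ω) y) : Measurable f := by
  classical
  obtain ⟨D, Dc, Dd⟩ := exists_countable_dense S
  have : Countable D := Dc.to_subtype
  apply measurable_of_isOpen
  intro U hU
  have key : f ⁻¹' U = ⋃ (d : D) (n : ℕ),
      if EMetric.ball (d : S) ((n : ℝ≥0∞)⁻¹) ⊆ U then
        {ω | edist (f ω) (d : S) < (n : ℝ≥0∞)⁻¹} else ∅ := by
    ext ω
    simp only [Set.mem_preimage, Set.mem_iUnion]
    constructor
    · intro hωU
      obtain ⟨ε, εpos, hε⟩ := EMetric.isOpen_iff.1 hU _ hωU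
      obtain ⟨n, hn⟩ := ENNReal.exists_inv_nat_lt (a := ε / 2)
        (by simpa using (ENNReal.half_pos εpos.ne').ne')
      have npos : (0 : ℝ≥0∞) < (n : ℝ≥0∞)⁻¹ := ENNReal.inv_pos.2 (by simp)
      obtain ⟨d, hd, hdist⟩ := EMetric.mem_closure_iff.1 (Dd (f ω)) _ npos
      refine ⟨⟨d, hd⟩, n, ?_⟩
      have hsub : EMetric.ball d ((n : ℝ≥0∞)⁻¹) ⊆ U := by
        intro x hx
        apply hε
        have : edist x (f ω) < (n : ℝ≥0∞)⁻¹ + (n : ℝ≥0∞)⁻¹ :=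
          lt_of_le_of_lt (edist_triangle x d (f ω))
            (ENNReal.add_lt_add hx (by rwa [edist_comm]))
        refine EMetric.mem_ball.2 (lt_of_lt_of_le this ?_)
        calc (n : ℝ≥0∞)⁻¹ + (n : ℝ≥0∞)⁻¹ ≤ ε / 2 + ε / 2 := add_le_add hn.le hn.le
          _ = ε := ENNReal.add_halves ε
      simp [hsub, hdist]
    · rintro ⟨d, n, hmem⟩
      by_cases hsub : EMetric.ball (d : S) ((n : ℝ≥0∞)⁻¹) ⊆ U
      · simp only [hsub, if_true, Set.mem_setOf_eq] at hmem
        exact hsub (EMetric.mem_ball.2 hmem)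
      · simp [hsub] at hmem
  rw [key]
  refine MeasurableSet.iUnion fun d => MeasurableSet.iUnion fun n => ?_
  split_ifs
  · exact measurableSet_lt (h d) measurable_const
  · exact MeasurableSet.empty

/-- Theorem `F sub f` of the paper. Let `(Ω, 𝒜)` be a measurable space,
`X` a (nonempty) compact metric space and `g : Ω × X → ℂⁿ` a random continuous function.
Then the map sending `ω` to the image `g (ω, X)`, a nonempty compact subset of `ℂⁿ`, is a
measurable map from `Ω` to the space `𝒦′(ℂⁿ)` of nonempty compact subsets of `ℂⁿ` with the
Hausdorff distance and its Borel σ-algebra; i.e. it is a random compact set in `ℂⁿ`. -/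
theorem image_random_compact
    {Ω : Type*} [MeasurableSpace Ω]
    {X : Type*} [MetricSpace X] [CompactSpace X] [Nonempty X] {n : ℕ}
    [MeasurableSpace (NonemptyCompacts (Fin n → ℂ))]
    [BorelSpace (NonemptyCompacts (Fin n → ℂ))]
    (g : Ω → X → (Fin n → ℂ))
    (hg_cont : ∀ ω, Continuous (g ω))
    (hg_meas : ∀ x, Measurable fun ω => g ω x) :
    Measurable (fun ω => (⟨⟨Set.range (g ω), isCompact_range (hg_cont ω)⟩,
      Set.range_nonempty _⟩ : NonemptyCompacts (Fin n → ℂ))) := by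
  apply measurable_of_edist_aux
  intro K
  obtain ⟨T, Tc, Td⟩ := exists_countable_dense X
  have : Countable T := Tc.to_subtype
  obtain ⟨DK, DKc, DKd⟩ := exists_countable_dense (K : Set (Fin n → ℂ))
  have : Countable DK := DKc.to_subtype
  have hedist : ∀ ω, edist (⟨⟨Set.range (g ω), isCompact_range (hg_cont ω)⟩,
      Set.range_nonempty _⟩ : NonemptyCompacts (Fin n → ℂ)) K
      = (⨆ t : T, EMetric.infEdist (g ω t) (K : Set (Fin n → ℂ))) ⊔
        (⨆ y : DK, ⨅ t : T, edist ((y : (K : Set (Fin n → ℂ))) : Fin n → ℂ) (g ω t)) := by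
    intro ω
    have h1 : edist (⟨⟨Set.range (g ω), isCompact_range (hg_cont ω)⟩,
        Set.range_nonempty _⟩ : NonemptyCompacts (Fin n → ℂ)) K
        = Metric.hausdorffEDist (Set.range (g ω)) (K : Set (Fin n → ℂ)) := rfl
    rw [h1, EMetric.hausdorffEdist_def]
    congr 1
    · -- sup over range
      rw [iSup_range]
      have := dense_iSup_aux Td (f := fun t => EMetric.infEdist (g ω t) (K : Set (Fin n → ℂ)))
        (EMetric.continuous_infEdist.comp (hg_cont ω))
      exact (this.symm)
    · -- sup over K
      rw [iSup_subtype']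
      have hys : ∀ y : (K : Set (Fin n → ℂ)),
          EMetric.infEdist (y : Fin n → ℂ) (Set.range (g ω))
            = ⨅ t : T, edist (y : Fin n → ℂ) (g ω t) := by
        intro y
        rw [EMetric.infEdist, Metric.infEDist, iInf_range]
        exact (dense_iInf_aux Td (f := fun t => edist (y : Fin n → ℂ) (g ω t))
          (continuous_const.edist (hg_cont ω))).symm
      calc (⨆ y : (K : Set (Fin n → ℂ)), EMetric.infEdist (y : Fin n → ℂ) (Set.range (g ω)))
          = ⨆ y : (K : Set (Fin n → ℂ)), ⨅ t : T, edist (y : Fin n → ℂ) (g ω t) := by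
            exact iSup_congr hys
        _ = ⨆ y : DK, ⨅ t : T, edist ((y : (K : Set (Fin n → ℂ))) : Fin n → ℂ) (g ω t) := by
            refine (dense_iSup_aux DKd (f := fun y : (K : Set (Fin n → ℂ)) =>
              ⨅ t : T, edist (y : Fin n → ℂ) (g ω t)) ?_).symm
            · rw [show (fun y : (K : Set (Fin n → ℂ)) => ⨅ t : T, edist (y : Fin n → ℂ) (g ω t))
                = fun y : (K : Set (Fin n → ℂ)) =>
                    EMetric.infEdist (y : Fin n → ℂ) (Set.range (g ω)) from
                (funext fun y => (hys y).symm)]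
              exact EMetric.continuous_infEdist.comp continuous_subtype_val
  simp only [hedist]
  apply Measurable.sup
  · exact Measurable.iSup fun t => (hg_meas t).infEdist
  · exact Measurable.iSup fun y => Measurable.iInf fun t => measurable_const.edist (hg_meas t)
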